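/- arXiv:2005.08241 — 3 statements merged into one kernel-verified Lean document; each statement's English description precedes it below -/
import Mathlib

section
/- Let f: ℝⁿ → ℝⁿ be continuously differentiable and suppose there exist λ ≥ 0, ε > 0, and a symmetric positive definite matrix P ∈ ℝ^{n×n} such that for every x ∈ ℝⁿ, Df(x)ᵀP + P·Df(x) + 2λP ≼ −εI, where Df(x) denotes the Jacobian of f at x. If the system ẋ = f(x) admits a solution on [0, ∞) with bounded range, then f has a unique zero x* ∈ ℝⁿ, and every solution x: [0, ∞) → ℝⁿ of ẋ = f(x) with bounded range satisfies x(t) → x* as t → ∞. -/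
open Matrix Polynomial

open scoped Classical in
/-- Number of eigenvalues (roots of the complex characteristic polynomial, counted with
algebraic multiplicity) of a real matrix satisfying a predicate. -/
noncomputable def eigCount {n : Type*} [Fintype n] [DecidableEq n]
    (A : Matrix n n ℝ) (p : ℂ → Prop) : ℕ :=
  Multiset.card (((A.map (Complex.ofReal)).charpoly.roots).filter p)

/-- A real symmetric matrix has inertia `(neg, 0, pos)`: `neg` negative eigenvalues,
no zero eigenvalues, and `pos` positive eigenvalues, counted with multiplicity. -/
def hasInertia {n : Type*} [Fintype n] [DecidableEq n]
    (P : Matrix n n ℝ) (neg pos : ℕ) : Prop :=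
  eigCount P (fun z => z.re < 0) = neg ∧
  eigCount P (fun z => z.re = 0) = 0 ∧
  eigCount P (fun z => 0 < z.re) = pos

/-- Jacobian matrix of a map `f : ℝⁿ → ℝⁿ` at `x`. -/
noncomputable def jacobian {n : Type*} [Fintype n] [DecidableEq n]
    (f : (n → ℝ) → (n → ℝ)) (x : n → ℝ) : Matrix n n ℝ :=
  LinearMap.toMatrix' (fderiv ℝ f x).toLinearMap

/-- Largest singular value of a complex matrix (its ℓ² → ℓ² operator norm). -/
noncomputable def sigmaMax {l m : Type*} [Fintype l] [Fintype m] [DecidableEq m]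
    (M : Matrix l m ℂ) : ℝ :=
  ‖LinearMap.toContinuousLinearMap (Matrix.toEuclideanLin M)‖

/-- Shifted transfer function `C ((iω − λ)I − A)⁻¹ B` evaluated on the line `Re s = −λ`. -/
noncomputable def shiftedTF {n m l : ℕ} (A : Matrix (Fin n) (Fin n) ℝ)
    (B : Matrix (Fin n) (Fin m) ℝ) (C : Matrix (Fin l) (Fin n) ℝ) (lam ω : ℝ) :
    Matrix (Fin l) (Fin m) ℂ :=
  (C.map Complex.ofReal) *
    ((((ω : ℂ) * Complex.I - (lam : ℂ)) • (1 : Matrix (Fin n) (Fin n) ℂ)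
      - A.map Complex.ofReal)⁻¹) *
    (B.map Complex.ofReal)

/-- `x` is a solution of `ẋ = f(x)` on `[0, ∞)`. -/
def isSolutionOn {n : ℕ} (f : (Fin n → ℝ) → (Fin n → ℝ)) (x : ℝ → (Fin n → ℝ)) : Prop :=
  ∀ t ∈ Set.Ici (0 : ℝ), HasDerivAt x (f (x t)) t

/-- `x` has bounded range on `[0, ∞)`. -/
def boundedOn {n : ℕ} (x : ℝ → (Fin n → ℝ)) : Prop :=
  Bornology.IsBounded (x '' Set.Ici (0 : ℝ))

set_option linter.unusedSectionVars false


lemma dotSym {n : ℕ} {Q : Matrix (Fin n) (Fin n) ℝ} (h : Qᵀ = Q) (a b : Fin n → ℝ) :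
    a ⬝ᵥ Q *ᵥ b = b ⬝ᵥ Q *ᵥ a := by
  rw [Matrix.dotProduct_mulVec, ← Matrix.mulVec_transpose, h, dotProduct_comm]

lemma psdCS {n : ℕ} {Q : Matrix (Fin n) (Fin n) ℝ} (hQ : Q.PosSemidef) (a b : Fin n → ℝ) :
    (a ⬝ᵥ Q *ᵥ b) ^ 2 ≤ (a ⬝ᵥ Q *ᵥ a) * (b ⬝ᵥ Q *ᵥ b) := by
  have hsym : Qᵀ = Q := hQ.1
  have key : ∀ t : ℝ, 0 ≤ (a ⬝ᵥ Q *ᵥ a) * (t * t) + (2 * (a ⬝ᵥ Q *ᵥ b)) * t + (b ⬝ᵥ Q *ᵥ b) := by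
    intro t
    have h0 := hQ.dotProduct_mulVec_nonneg (t • a + b)
    simp only [star_trivial] at h0
    have hexp : (t • a + b) ⬝ᵥ Q *ᵥ (t • a + b)
        = (a ⬝ᵥ Q *ᵥ a) * (t * t) + (2 * (a ⬝ᵥ Q *ᵥ b)) * t + (b ⬝ᵥ Q *ᵥ b) := by
      simp only [mulVec_add, mulVec_smul, add_dotProduct, smul_dotProduct, dotProduct_add,
        dotProduct_smul, smul_eq_mul, dotSym hsym b a]
      ring
    rw [hexp] at h0
    exact h0
  have hd := discrim_le_zero key
  simp only [discrim] at hd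
  nlinarith [hd]

lemma quadUpper {n : ℕ} (Q : Matrix (Fin n) (Fin n) ℝ) :
    ∃ C > 0, ∀ v : Fin n → ℝ, v ⬝ᵥ Q *ᵥ v ≤ C * (v ⬝ᵥ v) := by
  refine ⟨(∑ i, ∑ j, |Q i j|) + 1, by positivity, fun v => ?_⟩
  have hvv : 0 ≤ v ⬝ᵥ v := by
    simp only [dotProduct]; exact Finset.sum_nonneg fun i _ => mul_self_nonneg _
  have hsq : ∀ i, v i * v i ≤ v ⬝ᵥ v := by
    intro i
    simp only [dotProduct]
    exact Finset.single_le_sum (fun k _ => mul_self_nonneg (v k)) (Finset.mem_univ i)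
  have key : ∀ i j, v i * (Q i j * v j) ≤ |Q i j| * (v ⬝ᵥ v) := by
    intro i j
    have h1 : v i * (Q i j * v j) ≤ |v i| * (|Q i j| * |v j|) := by
      calc v i * (Q i j * v j) ≤ |v i * (Q i j * v j)| := le_abs_self _
      _ = |v i| * (|Q i j| * |v j|) := by rw [abs_mul, abs_mul]
    have h2 : |v i| * |v j| ≤ v ⬝ᵥ v := by
      nlinarith [hsq i, hsq j, sq_nonneg (|v i| - |v j|), abs_nonneg (v i), abs_nonneg (v j),
        sq_abs (v i), sq_abs (v j)]
    calc v i * (Q i j * v j) ≤ |v i| * (|Q i j| * |v j|) := h1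
    _ = |Q i j| * (|v i| * |v j|) := by ring
    _ ≤ |Q i j| * (v ⬝ᵥ v) := by
        exact mul_le_mul_of_nonneg_left h2 (abs_nonneg _)
  calc v ⬝ᵥ Q *ᵥ v = ∑ i, ∑ j, v i * (Q i j * v j) := by
        simp only [dotProduct, mulVec, Finset.mul_sum]
  _ ≤ ∑ i, ∑ j, |Q i j| * (v ⬝ᵥ v) :=
      Finset.sum_le_sum fun i _ => Finset.sum_le_sum fun j _ => key i j
  _ = (∑ i, ∑ j, |Q i j|) * (v ⬝ᵥ v) := by rw [Finset.sum_mul]; congr 1; ext i; rw [Finset.sum_mul]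
  _ ≤ ((∑ i, ∑ j, |Q i j|) + 1) * (v ⬝ᵥ v) := by nlinarith [hvv]

lemma quadLower {n : ℕ} {P : Matrix (Fin n) (Fin n) ℝ} (hP : P.PosDef) :
    ∃ c > 0, ∀ v : Fin n → ℝ, v ⬝ᵥ v ≤ c * (v ⬝ᵥ P *ᵥ v) := by
  obtain ⟨C, hC, hCb⟩ := quadUpper P⁻¹
  have hPinv : (P⁻¹).PosDef := hP.inv
  refine ⟨C, hC, fun v => ?_⟩
  have hdet : IsUnit P.det := isUnit_iff_ne_zero.2 (ne_of_gt hP.det_pos)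
  have hid : P⁻¹ *ᵥ (P *ᵥ v) = v := by
    rw [Matrix.mulVec_mulVec, Matrix.nonsing_inv_mul _ hdet, Matrix.one_mulVec]
  have hcs := psdCS hPinv.posSemidef v (P *ᵥ v)
  rw [hid] at hcs
  have h1 : v ⬝ᵥ P⁻¹ *ᵥ v ≤ C * (v ⬝ᵥ v) := hCb v
  have h2 : (P *ᵥ v) ⬝ᵥ v = v ⬝ᵥ P *ᵥ v := dotProduct_comm _ _
  rw [h2] at hcs
  have hvv : 0 ≤ v ⬝ᵥ v := by
    simp only [dotProduct]; exact Finset.sum_nonneg fun i _ => mul_self_nonneg _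
  have hPv : 0 ≤ v ⬝ᵥ P *ᵥ v := by simpa using hP.posSemidef.dotProduct_mulVec_nonneg v
  rcases eq_or_lt_of_le hvv with h | h
  · rw [← h]; positivity
  · nlinarith [hcs, h1, hPv]



lemma jacobian_mulVec {n : ℕ} (f : (Fin n → ℝ) → (Fin n → ℝ)) (x v : Fin n → ℝ) :
    jacobian f x *ᵥ v = fderiv ℝ f x v := by
  rw [jacobian, ← Matrix.toLin'_apply, Matrix.toLin'_toMatrix']
  rfl

section KeyIneq
variable {n : ℕ} {f : (Fin n → ℝ) → (Fin n → ℝ)} (hf : ContDiff ℝ 1 f)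
  {lam ε : ℝ} (hlam : 0 ≤ lam) (hε : 0 < ε)
  {P : Matrix (Fin n) (Fin n) ℝ} (hP : P.PosDef)
  (hLMI : ∀ x : Fin n → ℝ,
      ((-(ε • (1 : Matrix (Fin n) (Fin n) ℝ))) -
        ((jacobian f x)ᵀ * P + P * jacobian f x + (2 * lam) • P)).PosSemidef)

include hlam hε hP hLMI in
lemma jacBound (x v : Fin n → ℝ) :
    v ⬝ᵥ P *ᵥ (fderiv ℝ f x v) ≤ -(ε / 2) * (v ⬝ᵥ v) := by
  have hsym : Pᵀ = P := hP.isHermitian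
  have h0 := (hLMI x).dotProduct_mulVec_nonneg v
  simp only [star_trivial] at h0
  set J := jacobian f x with hJ
  have hexp : v ⬝ᵥ ((-(ε • (1 : Matrix (Fin n) (Fin n) ℝ))) -
      (Jᵀ * P + P * J + (2 * lam) • P)) *ᵥ v
      = -(ε * (v ⬝ᵥ v)) - (2 * (v ⬝ᵥ P *ᵥ (J *ᵥ v)) + 2 * lam * (v ⬝ᵥ P *ᵥ v)) := by
    have h1 : v ⬝ᵥ (Jᵀ * P) *ᵥ v = v ⬝ᵥ P *ᵥ (J *ᵥ v) := by
      rw [← Matrix.mulVec_mulVec, Matrix.dotProduct_mulVec, Matrix.vecMul_transpose]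
      rw [dotSym hsym (J *ᵥ v) v]
    have h2 : v ⬝ᵥ (P * J) *ᵥ v = v ⬝ᵥ P *ᵥ (J *ᵥ v) := by
      rw [← Matrix.mulVec_mulVec]
    rw [Matrix.sub_mulVec, dotProduct_sub, Matrix.add_mulVec, Matrix.add_mulVec,
      dotProduct_add, dotProduct_add, h1, h2, Matrix.smul_mulVec, dotProduct_smul,
      Matrix.neg_mulVec, dotProduct_neg, Matrix.smul_mulVec, Matrix.one_mulVec,
      dotProduct_smul]
    simp only [smul_eq_mul]
    ring
  rw [hexp] at h0
  have hJv : J *ᵥ v = fderiv ℝ f x v := jacobian_mulVec f x v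
  rw [hJv] at h0
  have hPv : 0 ≤ v ⬝ᵥ P *ᵥ v := by simpa using hP.posSemidef.dotProduct_mulVec_nonneg v
  nlinarith [h0, hPv, mul_nonneg hlam hPv]

include hf hlam hε hP hLMI in
lemma keyIneq (a b : Fin n → ℝ) :
    2 * ((a - b) ⬝ᵥ P *ᵥ (f a - f b)) ≤ -ε * ((a - b) ⬝ᵥ (a - b)) := by
  set v := a - b with hv
  -- the linear functional w ↦ v ⬝ᵥ P *ᵥ w
  let l : (Fin n → ℝ) →ₗ[ℝ] ℝ :=
    { toFun := fun w => v ⬝ᵥ P *ᵥ w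
      map_add' := fun w₁ w₂ => by simp [mulVec_add, dotProduct_add]
      map_smul' := fun c w => by simp [mulVec_smul, dotProduct_smul] }
  let L : (Fin n → ℝ) →L[ℝ] ℝ := LinearMap.toContinuousLinearMap l
  have hL : ∀ w, L w = v ⬝ᵥ P *ᵥ w := fun w => rfl
  have hfd : Differentiable ℝ f := hf.differentiable one_ne_zero
  set g : ℝ → ℝ := fun s => v ⬝ᵥ P *ᵥ f (b + s • v) with hg
  have hgd : ∀ s : ℝ, HasDerivAt g (v ⬝ᵥ P *ᵥ (fderiv ℝ f (b + s • v) v)) s := by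
    intro s
    have hc : HasDerivAt (fun s : ℝ => b + s • v) v s := by
      simpa using ((hasDerivAt_id s).smul_const v).const_add b
    have hfc : HasDerivAt (fun s : ℝ => f (b + s • v)) (fderiv ℝ f (b + s • v) v) s :=
      (hfd (b + s • v)).hasFDerivAt.comp_hasDerivAt s hc
    have := (L.hasFDerivAt (x := f (b + s • v))).comp_hasDerivAt s hfc
    simpa [hL, Function.comp_def] using this
  have hderiv_le : ∀ s : ℝ, v ⬝ᵥ P *ᵥ (fderiv ℝ f (b + s • v) v) ≤ -(ε / 2) * (v ⬝ᵥ v) :=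
    fun s => jacBound hlam hε hP hLMI (b + s • v) v
  -- h s := g s + (ε/2) (v⬝v) s is antitone
  set h : ℝ → ℝ := fun s => g s + (ε / 2) * (v ⬝ᵥ v) * s with hh
  have hhd : ∀ s : ℝ, HasDerivAt h
      (v ⬝ᵥ P *ᵥ (fderiv ℝ f (b + s • v) v) + (ε / 2) * (v ⬝ᵥ v)) s := by
    intro s
    exact (hgd s).add (((hasDerivAt_id s).const_mul ((ε / 2) * (v ⬝ᵥ v))).congr_deriv
      (by ring))
  have hanti : Antitone h := by
    apply antitone_of_deriv_nonpos
    · exact fun s => (hhd s).differentiableAt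
    · intro s
      rw [(hhd s).deriv]
      have := hderiv_le s
      nlinarith [this]
  have h10 := hanti (by norm_num : (0:ℝ) ≤ 1)
  have hg1 : g 1 = v ⬝ᵥ P *ᵥ f a := by
    have hba : b + (1:ℝ) • v = a := by rw [one_smul, hv]; abel
    simp only [hg]
    rw [hba]
  have hg0 : g 0 = v ⬝ᵥ P *ᵥ f b := by simp [hg]
  have : g 1 + (ε / 2) * (v ⬝ᵥ v) ≤ g 0 := by simpa [hh] using h10
  rw [hg1, hg0] at this
  have hsub : v ⬝ᵥ P *ᵥ (f a - f b) = v ⬝ᵥ P *ᵥ f a - v ⬝ᵥ P *ᵥ f b := by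
    rw [mulVec_sub, dotProduct_sub]
  rw [hsub]
  linarith

end KeyIneq


section Contract
variable {n : ℕ} {f : (Fin n → ℝ) → (Fin n → ℝ)} (hf : ContDiff ℝ 1 f)
  {lam ε : ℝ} (hlam : 0 ≤ lam) (hε : 0 < ε)
  {P : Matrix (Fin n) (Fin n) ℝ} (hP : P.PosDef)
  (hLMI : ∀ x : Fin n → ℝ,
      ((-(ε • (1 : Matrix (Fin n) (Fin n) ℝ))) -
        ((jacobian f x)ᵀ * P + P * jacobian f x + (2 * lam) • P)).PosSemidef)

-- derivative of the quadratic form along two solutions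
lemma quadDeriv {x y : ℝ → Fin n → ℝ} {t : ℝ} {x' y' : Fin n → ℝ}
    (hx : HasDerivAt x x' t) (hy : HasDerivAt y y' t) (hsym : Pᵀ = P) :
    HasDerivAt (fun s => (x s - y s) ⬝ᵥ P *ᵥ (x s - y s))
      (2 * ((x t - y t) ⬝ᵥ P *ᵥ (x' - y'))) t := by
  set v : ℝ → Fin n → ℝ := fun s => x s - y s with hvdef
  have hv : HasDerivAt v (x' - y') t := hx.sub hy
  have hvi : ∀ i, HasDerivAt (fun s => v s i) ((x' - y') i) t := fun i => hasDerivAt_pi.1 hv i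
  have hPi : ∀ i, HasDerivAt (fun s => (P *ᵥ v s) i) ((P *ᵥ (x' - y')) i) t := by
    intro i
    have : HasDerivAt (fun s => ∑ j, P i j * v s j) (∑ j, P i j * (x' - y') j) t :=
      HasDerivAt.fun_sum fun j _ => (hvi j).const_mul (P i j)
    simpa [Matrix.mulVec, dotProduct] using this
  have hsum : HasDerivAt (fun s => ∑ i, v s i * (P *ᵥ v s) i)
      (∑ i, ((x' - y') i * (P *ᵥ v t) i + v t i * (P *ᵥ (x' - y')) i)) t :=
    HasDerivAt.fun_sum fun i _ => (hvi i).mul (hPi i)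
  have heq : (∑ i, ((x' - y') i * (P *ᵥ v t) i + v t i * (P *ᵥ (x' - y')) i))
      = 2 * (v t ⬝ᵥ P *ᵥ (x' - y')) := by
    rw [Finset.sum_add_distrib]
    have h1 : ∑ i, (x' - y') i * (P *ᵥ v t) i = (x' - y') ⬝ᵥ P *ᵥ v t := rfl
    have h2 : ∑ i, v t i * (P *ᵥ (x' - y')) i = v t ⬝ᵥ P *ᵥ (x' - y') := rfl
    rw [h1, h2, dotSym hsym (x' - y') (v t)]
    ring
  rw [heq] at hsum
  exact hsum

include hf hlam hε hP hLMI in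
lemma contraction : ∃ k > 0, ∀ x y : ℝ → Fin n → ℝ, isSolutionOn f x → isSolutionOn f y →
    ∀ t ∈ Set.Ici (0:ℝ), (x t - y t) ⬝ᵥ P *ᵥ (x t - y t) ≤
      ((x 0 - y 0) ⬝ᵥ P *ᵥ (x 0 - y 0)) * Real.exp (-(k * t)) := by
  obtain ⟨C, hC, hCb⟩ := quadUpper P
  refine ⟨ε / C, by positivity, fun x y hx hy t ht => ?_⟩
  set k := ε / C with hk
  have hsym : Pᵀ = P := hP.isHermitian
  set V : ℝ → ℝ := fun s => (x s - y s) ⬝ᵥ P *ᵥ (x s - y s) with hV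
  set W : ℝ → ℝ := fun s => V s * Real.exp (k * s) with hW
  have hVd : ∀ s ∈ Set.Ici (0:ℝ), HasDerivAt V
      (2 * ((x s - y s) ⬝ᵥ P *ᵥ (f (x s) - f (y s)))) s :=
    fun s hs => quadDeriv (hx s hs) (hy s hs) hsym
  have hWd : ∀ s ∈ Set.Ici (0:ℝ), HasDerivAt W
      (2 * ((x s - y s) ⬝ᵥ P *ᵥ (f (x s) - f (y s))) * Real.exp (k * s)
        + V s * (k * Real.exp (k * s))) s := by
    intro s hs
    have he : HasDerivAt (fun s : ℝ => Real.exp (k * s)) (k * Real.exp (k * s)) s := by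
      have h1 : HasDerivAt (fun s : ℝ => k * s) k s := by
        simpa using (hasDerivAt_id s).const_mul k
      simpa [mul_comm] using h1.exp
    exact (hVd s hs).mul he
  have hWanti : AntitoneOn W (Set.Ici 0) := by
    apply antitoneOn_of_deriv_nonpos (convex_Ici 0)
    · exact fun s hs => ((hWd s hs).continuousAt).continuousWithinAt
    · intro s hs
      rw [interior_Ici] at hs
      exact ((hWd s (Set.mem_Ici.2 (le_of_lt hs))).differentiableAt).differentiableWithinAt
    · intro s hs
      rw [interior_Ici] at hs
      rw [(hWd s (Set.mem_Ici.2 (le_of_lt hs))).deriv]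
      have hkey := keyIneq hf hlam hε hP hLMI (x s) (y s)
      have hub : V s ≤ C * ((x s - y s) ⬝ᵥ (x s - y s)) := hCb _
      have hexp : 0 < Real.exp (k * s) := Real.exp_pos _
      have h1 : 2 * ((x s - y s) ⬝ᵥ P *ᵥ (f (x s) - f (y s))) + k * V s ≤ 0 := by
        have : k * V s ≤ ε * ((x s - y s) ⬝ᵥ (x s - y s)) := by
          rw [hk]
          rw [div_mul_eq_mul_div, div_le_iff₀ hC] at *
          nlinarith [hub, hε.le]
        linarith [hkey]
      nlinarith [h1, hexp, mul_le_mul_of_nonneg_right h1 hexp.le]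
  have hWt : W t ≤ W 0 := hWanti (Set.self_mem_Ici) ht ht
  have h0 : W 0 = V 0 := by simp [hW]
  have hle : V t * Real.exp (k * t) ≤ V 0 := by rw [← h0]; exact hWt
  have hexp : (0:ℝ) < Real.exp (k * t) := Real.exp_pos _
  calc V t = (V t * Real.exp (k * t)) * (Real.exp (k * t))⁻¹ := by field_simp
  _ ≤ V 0 * (Real.exp (k * t))⁻¹ := mul_le_mul_of_nonneg_right hle (by positivity)
  _ = V 0 * Real.exp (-(k * t)) := by rw [Real.exp_neg]
end Contract
lemma dotSelfNonneg {n : ℕ} (v : Fin n → ℝ) : 0 ≤ v ⬝ᵥ v := by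
  simp only [dotProduct]
  exact Finset.sum_nonneg fun i _ => mul_self_nonneg _

lemma normLeSqrtDot {n : ℕ} (v : Fin n → ℝ) : ‖v‖ ≤ Real.sqrt (v ⬝ᵥ v) := by
  rw [pi_norm_le_iff_of_nonneg (Real.sqrt_nonneg _)]
  intro i
  have h1 : v i * v i ≤ v ⬝ᵥ v := by
    simp only [dotProduct]
    exact Finset.single_le_sum (fun k _ => mul_self_nonneg (v k)) (Finset.mem_univ i)
  have heq : ‖v i‖ = Real.sqrt (v i * v i) := by
    rw [Real.norm_eq_abs, ← Real.sqrt_mul_self (abs_nonneg (v i)), abs_mul_abs_self]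
  rw [heq]
  exact Real.sqrt_le_sqrt h1

lemma dotLeCardNorm {n : ℕ} (v : Fin n → ℝ) : v ⬝ᵥ v ≤ (n : ℝ) * ‖v‖ ^ 2 := by
  have h : ∀ i, v i * v i ≤ ‖v‖ ^ 2 := by
    intro i
    have h1 : |v i| ≤ ‖v‖ := by simpa [Real.norm_eq_abs] using norm_le_pi_norm v i
    nlinarith [abs_nonneg (v i), sq_abs (v i)]
  calc v ⬝ᵥ v = ∑ i, v i * v i := rfl
  _ ≤ ∑ _i : Fin n, ‖v‖ ^ 2 := Finset.sum_le_sum fun i _ => h i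
  _ = (n : ℝ) * ‖v‖ ^ 2 := by simp [Finset.sum_const, Finset.card_univ, nsmul_eq_mul]


/-- (Asymptotic behavior of strictly `0`-dominant systems.)
If `f` is `C¹` and there are `λ ≥ 0`, `ε > 0` and a symmetric positive definite `P` with
`Df(x)ᵀP + P·Df(x) + 2λP ≼ −εI` for all `x`, and the system `ẋ = f(x)` admits a bounded
solution on `[0, ∞)`, then `f` has a unique zero `x*`, and every bounded solution on
`[0, ∞)` converges to `x*`. -/
theorem statement2 {n : ℕ} (f : (Fin n → ℝ) → (Fin n → ℝ)) (hf : ContDiff ℝ 1 f)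
    (lam ε : ℝ) (hlam : 0 ≤ lam) (hε : 0 < ε)
    (P : Matrix (Fin n) (Fin n) ℝ) (hP : P.PosDef)
    (hLMI : ∀ x : Fin n → ℝ,
      ((-(ε • (1 : Matrix (Fin n) (Fin n) ℝ))) -
        ((jacobian f x)ᵀ * P + P * jacobian f x + (2 * lam) • P)).PosSemidef)
    (hexists : ∃ x : ℝ → (Fin n → ℝ), isSolutionOn f x ∧ boundedOn x) :
    ∃ xstar : Fin n → ℝ, f xstar = 0 ∧ (∀ y, f y = 0 → y = xstar) ∧
      ∀ x : ℝ → (Fin n → ℝ), isSolutionOn f x → boundedOn x →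
        Filter.Tendsto x Filter.atTop (nhds xstar) := by
  obtain ⟨x0, hx0sol, hx0bdd⟩ := hexists
  obtain ⟨c, hc, hcb⟩ := quadLower hP
  obtain ⟨C, hCpos, hCb⟩ := quadUpper P
  obtain ⟨k, hk, hcontr⟩ := contraction hf hlam hε hP hLMI
  -- x0 is continuous on [0,∞) and bounded by M
  obtain ⟨M, hM⟩ := hx0bdd.exists_norm_le
  have hMx : ∀ t ≥ (0:ℝ), ‖x0 t‖ ≤ M := fun t ht => hM _ ⟨t, ht, rfl⟩
  have hM0 : (0:ℝ) ≤ M := le_trans (norm_nonneg _) (hMx 0 le_rfl)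
  -- dot-product bound on differences along the trajectory
  have hB0 : ∀ s ≥ (0:ℝ), ∀ t ≥ (0:ℝ),
      (x0 s - x0 t) ⬝ᵥ (x0 s - x0 t) ≤ (n : ℝ) * (2 * M) ^ 2 := by
    intro s hs t ht
    have h1 : ‖x0 s - x0 t‖ ≤ 2 * M := by
      calc ‖x0 s - x0 t‖ ≤ ‖x0 s‖ + ‖x0 t‖ := norm_sub_le _ _
      _ ≤ 2 * M := by linarith [hMx s hs, hMx t ht]
    calc (x0 s - x0 t) ⬝ᵥ (x0 s - x0 t) ≤ (n : ℝ) * ‖x0 s - x0 t‖ ^ 2 := dotLeCardNorm _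
    _ ≤ (n : ℝ) * (2 * M) ^ 2 := by
        apply mul_le_mul_of_nonneg_left _ (Nat.cast_nonneg n)
        nlinarith [norm_nonneg (x0 s - x0 t)]
  -- shifted solutions
  have hshift : ∀ τ ≥ (0:ℝ), isSolutionOn f (fun t => x0 (t + τ)) := by
    intro τ hτ t ht
    have h1 : HasDerivAt (fun t : ℝ => t + τ) 1 t := (hasDerivAt_id t).add_const τ
    have h2 := HasDerivAt.scomp t (hx0sol (t + τ) (add_nonneg ht hτ)) h1
    simpa [Function.comp_def] using h2
  set D : ℝ := c * (C * ((n : ℝ) * (2 * M) ^ 2)) with hD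
  have hD0 : 0 ≤ D := by positivity
  -- uniform distance estimate
  have hdist : ∀ τ ≥ (0:ℝ), ∀ t ≥ (0:ℝ),
      dist (x0 (t + τ)) (x0 t) ≤ Real.sqrt (D * Real.exp (-(k * t))) := by
    intro τ hτ t ht
    have hco := hcontr (fun t => x0 (t + τ)) x0 (hshift τ hτ) hx0sol t ht
    simp only [zero_add] at hco
    set w : Fin n → ℝ := x0 (t + τ) - x0 t with hw
    have h1 : w ⬝ᵥ w ≤ c * (w ⬝ᵥ P *ᵥ w) := hcb w
    have hV0 : (x0 τ - x0 0) ⬝ᵥ P *ᵥ (x0 τ - x0 0) ≤ C * ((n : ℝ) * (2 * M) ^ 2) := by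
      calc (x0 τ - x0 0) ⬝ᵥ P *ᵥ (x0 τ - x0 0)
          ≤ C * ((x0 τ - x0 0) ⬝ᵥ (x0 τ - x0 0)) := hCb _
      _ ≤ C * ((n : ℝ) * (2 * M) ^ 2) :=
          mul_le_mul_of_nonneg_left (hB0 τ hτ 0 le_rfl) hCpos.le
    have hexp : (0:ℝ) < Real.exp (-(k * t)) := Real.exp_pos _
    have h2 : w ⬝ᵥ w ≤ D * Real.exp (-(k * t)) := by
      calc w ⬝ᵥ w ≤ c * (w ⬝ᵥ P *ᵥ w) := h1
      _ ≤ c * (((x0 τ - x0 0) ⬝ᵥ P *ᵥ (x0 τ - x0 0)) * Real.exp (-(k * t))) :=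
          mul_le_mul_of_nonneg_left hco hc.le
      _ ≤ c * ((C * ((n : ℝ) * (2 * M) ^ 2)) * Real.exp (-(k * t))) := by
          apply mul_le_mul_of_nonneg_left _ hc.le
          exact mul_le_mul_of_nonneg_right hV0 hexp.le
      _ = D * Real.exp (-(k * t)) := by rw [hD]; ring
    calc dist (x0 (t + τ)) (x0 t) = ‖w‖ := by rw [dist_eq_norm]
    _ ≤ Real.sqrt (w ⬝ᵥ w) := normLeSqrtDot w
    _ ≤ Real.sqrt (D * Real.exp (-(k * t))) := Real.sqrt_le_sqrt h2
  -- the limit exists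
  have htend0 : Filter.Tendsto (fun t : ℝ => D * Real.exp (-(k * t)))
      Filter.atTop (nhds 0) := by
    have h1 : Filter.Tendsto (fun t : ℝ => -(k * t)) Filter.atTop Filter.atBot := by
      apply Filter.tendsto_neg_atTop_atBot.comp
      exact Filter.Tendsto.const_mul_atTop hk Filter.tendsto_id
    have h2 := Real.tendsto_exp_atBot.comp h1
    have := h2.const_mul D
    simpa using this
  have hcauchy : Cauchy (Filter.map x0 Filter.atTop) := by
    rw [Metric.cauchy_iff]
    refine ⟨Filter.map_neBot, fun η hη => ?_⟩
    have hev : ∀ᶠ t in Filter.atTop, D * Real.exp (-(k * t)) < η ^ 2 :=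
      htend0.eventually (gt_mem_nhds (by positivity))
    obtain ⟨T, hT⟩ := Filter.eventually_atTop.1 hev
    set T' : ℝ := max T 0 with hT'
    have hkey : ∀ s ≥ T', ∀ u ≥ T', u ≤ s → dist (x0 s) (x0 u) < η := by
      intro s hs u hu hus
      have hu0 : (0:ℝ) ≤ u := le_trans (le_max_right T 0) hu
      have h1 : dist (x0 s) (x0 u) ≤ Real.sqrt (D * Real.exp (-(k * u))) := by
        have := hdist (s - u) (by linarith) u hu0
        simpa [add_sub_cancel] using this
      have h2 : D * Real.exp (-(k * u)) < η ^ 2 := hT u (le_trans (le_max_left T 0) hu)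
      calc dist (x0 s) (x0 u) ≤ Real.sqrt (D * Real.exp (-(k * u))) := h1
      _ < Real.sqrt (η ^ 2) := Real.sqrt_lt_sqrt (by positivity) h2
      _ = η := by rw [Real.sqrt_sq hη.le]
    refine ⟨x0 '' Set.Ici T', Filter.image_mem_map (Filter.Ici_mem_atTop T'), ?_⟩
    rintro _ ⟨s, hs, rfl⟩ _ ⟨u, hu, rfl⟩
    rcases le_total u s with h | h
    · exact hkey s hs u hu h
    · rw [dist_comm]; exact hkey u hu s hs h
  obtain ⟨xstar, hxstar⟩ := CompleteSpace.complete hcauchy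
  have hconv0 : Filter.Tendsto x0 Filter.atTop (nhds xstar) := hxstar
  -- xstar is an equilibrium
  have hx0cont : ContinuousOn x0 (Set.Ici 0) :=
    fun s hs => (hx0sol s hs).continuousAt.continuousWithinAt
  have hcontfx : ContinuousOn (fun s => f (x0 s)) (Set.Ici 0) :=
    hf.continuous.comp_continuousOn hx0cont
  have hFTC : ∀ t ≥ (0:ℝ), (∫ s in t..(t+1), f (x0 s)) = x0 (t + 1) - x0 t := by
    intro t ht
    have huicc : Set.uIcc t (t + 1) = Set.Icc t (t + 1) := Set.uIcc_of_le (by linarith)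
    apply intervalIntegral.integral_eq_sub_of_hasDerivAt
    · intro s hs
      rw [huicc] at hs
      exact hx0sol s (le_trans ht hs.1)
    · apply ContinuousOn.intervalIntegrable
      apply hcontfx.mono
      rw [huicc]
      exact fun s hs => le_trans ht hs.1
  have hfx : f xstar = 0 := by
    have hnorm : ∀ η > (0:ℝ), ‖f xstar‖ ≤ η := by
      intro η hη
      have htd : Filter.Tendsto (fun s => f (x0 s)) Filter.atTop (nhds (f xstar)) :=
        (hf.continuous.tendsto xstar).comp hconv0
      obtain ⟨N, hN⟩ := Metric.tendsto_atTop.1 htd η hη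
      set T : ℝ := max N 0 with hT
      have hbd : ∀ t ≥ T, ‖(x0 (t + 1) - x0 t) - f xstar‖ ≤ η := by
        intro t ht
        have ht0 : (0:ℝ) ≤ t := le_trans (le_max_right N 0) ht
        have hint1 : IntervalIntegrable (fun s => f (x0 s)) MeasureTheory.volume t (t+1) := by
          apply ContinuousOn.intervalIntegrable
          apply hcontfx.mono
          rw [Set.uIcc_of_le (by linarith : t ≤ t + 1)]
          exact fun s hs => le_trans ht0 hs.1
        have hsplit : (∫ s in t..(t+1), (f (x0 s) - f xstar))
            = (x0 (t + 1) - x0 t) - f xstar := by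
          rw [intervalIntegral.integral_sub hint1 intervalIntegrable_const,
            hFTC t ht0, intervalIntegral.integral_const]
          simp
        rw [← hsplit]
        have hboundpt : ∀ s ∈ Set.uIoc t (t + 1), ‖f (x0 s) - f xstar‖ ≤ η := by
          intro s hs
          rw [Set.uIoc_of_le (by linarith : t ≤ t + 1)] at hs
          have hsN : s ≥ N := le_trans (le_max_left N 0) (le_trans ht hs.1.le)
          have := hN s hsN
          rw [dist_eq_norm] at this
          exact this.le
        have := intervalIntegral.norm_integral_le_of_norm_le_const hboundpt
        simpa using this
      have hlim : Filter.Tendsto (fun t => (x0 (t + 1) - x0 t) - f xstar)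
          Filter.atTop (nhds (xstar - xstar - f xstar)) := by
        apply Filter.Tendsto.sub _ tendsto_const_nhds
        exact (hconv0.comp (Filter.tendsto_atTop_add_const_right _ 1 Filter.tendsto_id)).sub
          hconv0
      have hlimn : Filter.Tendsto (fun t => ‖(x0 (t + 1) - x0 t) - f xstar‖)
          Filter.atTop (nhds ‖xstar - xstar - f xstar‖) := hlim.norm
      have : ‖xstar - xstar - f xstar‖ ≤ η :=
        le_of_tendsto hlimn (Filter.eventually_atTop.2 ⟨T, hbd⟩)
      simpa using this
    by_contra h
    have hpos : 0 < ‖f xstar‖ := norm_pos_iff.2 h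
    have := hnorm (‖f xstar‖ / 2) (by positivity)
    linarith
  -- constant functions at zeros of f are solutions
  have hconst : ∀ z : Fin n → ℝ, f z = 0 → isSolutionOn f (fun _ => z) := by
    intro z hz t ht
    simpa [hz] using hasDerivAt_const t z
  -- every solution converges to xstar
  have hconvAll : ∀ x : ℝ → (Fin n → ℝ), isSolutionOn f x →
      Filter.Tendsto x Filter.atTop (nhds xstar) := by
    intro x hx
    have hco := hcontr x (fun _ => xstar) hx (hconst xstar hfx)
    set V0 : ℝ := (x 0 - xstar) ⬝ᵥ P *ᵥ (x 0 - xstar) with hV0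
    have hdd : ∀ t ≥ (0:ℝ), dist (x t) xstar ≤ Real.sqrt (c * V0 * Real.exp (-(k * t))) := by
      intro t ht
      have h1 := hco t ht
      set w : Fin n → ℝ := x t - xstar with hw
      have h2 : w ⬝ᵥ w ≤ c * V0 * Real.exp (-(k * t)) := by
        calc w ⬝ᵥ w ≤ c * (w ⬝ᵥ P *ᵥ w) := hcb w
        _ ≤ c * (V0 * Real.exp (-(k * t))) := mul_le_mul_of_nonneg_left h1 hc.le
        _ = c * V0 * Real.exp (-(k * t)) := by ring
      calc dist (x t) xstar = ‖w‖ := by rw [dist_eq_norm]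
      _ ≤ Real.sqrt (w ⬝ᵥ w) := normLeSqrtDot w
      _ ≤ Real.sqrt (c * V0 * Real.exp (-(k * t))) := Real.sqrt_le_sqrt h2
    rw [tendsto_iff_dist_tendsto_zero]
    have hg0 : Filter.Tendsto (fun t : ℝ => Real.sqrt (c * V0 * Real.exp (-(k * t))))
        Filter.atTop (nhds 0) := by
      have h1 : Filter.Tendsto (fun t : ℝ => c * V0 * Real.exp (-(k * t)))
          Filter.atTop (nhds 0) := by
        have h2 : Filter.Tendsto (fun t : ℝ => -(k * t)) Filter.atTop Filter.atBot := by
          apply Filter.tendsto_neg_atTop_atBot.comp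
          exact Filter.Tendsto.const_mul_atTop hk Filter.tendsto_id
        have h3 := Real.tendsto_exp_atBot.comp h2
        have := h3.const_mul (c * V0)
        simpa using this
      have := h1.sqrt
      simpa using this
    apply squeeze_zero' _ _ hg0
    · exact Filter.eventually_atTop.2 ⟨0, fun t _ => dist_nonneg⟩
    · exact Filter.eventually_atTop.2 ⟨0, fun t ht => hdd t ht⟩
  -- uniqueness
  refine ⟨xstar, hfx, ?_, fun x hx _ => hconvAll x hx⟩
  intro y hy
  have h1 : Filter.Tendsto (fun _ : ℝ => y) Filter.atTop (nhds xstar) :=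
    hconvAll _ (hconst y hy)
  exact tendsto_nhds_unique tendsto_const_nhds h1
end

section
/- For i ∈ {1, 2}, let Σᵢ be the system ẋᵢ = fᵢ(xᵢ) + Bᵢuᵢ, yᵢ = Cᵢxᵢ, with fᵢ: ℝ^{nᵢ} → ℝ^{nᵢ} continuously differentiable, Bᵢ ∈ ℝ^{nᵢ×mᵢ}, Cᵢ ∈ ℝ^{lᵢ×nᵢ}, and with l₁ = m₂ and l₂ = m₁. Fix λ ≥ 0 and suppose that for each i there exist γᵢ > 0, εᵢ > 0, and a symmetric matrix Pᵢ ∈ ℝ^{nᵢ×nᵢ} with inertia (pᵢ, 0, nᵢ−pᵢ) such that for every xᵢ ∈ ℝ^{nᵢ} the block matrix [[Dfᵢ(xᵢ)ᵀPᵢ + Pᵢ·Dfᵢ(xᵢ) + 2λPᵢ + εᵢI + CᵢᵀCᵢ, PᵢBᵢ], [BᵢᵀPᵢ, −γᵢ²I]] is negative semidefinite. If γ₁γ₂ < 1, then the closed-loop system obtained from the feedback interconnection u₁ = −y₂, u₂ = y₁, namely ẋ₁ = f₁(x₁) − B₁C₂x₂, ẋ₂ = f₂(x₂) + B₂C₁x₁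 with state x = (x₁, x₂) and vector field F(x₁, x₂) = (f₁(x₁) − B₁C₂x₂, f₂(x₂) + B₂C₁x₁), is strictly (p₁+p₂)-dominant with rate λ: there exist ε > 0 and a symmetric matrix P ∈ ℝ^{(n₁+n₂)×(n₁+n₂)} with inertia (p₁+p₂, 0, n₁+n₂−p₁−p₂) such that DF(x)ᵀP + P·DF(x) + 2λP ≼ −εI for all x ∈ ℝ^{n₁+n₂}. -/
open Matrix Polynomial

/-- Closed-loop vector field of the negative feedback interconnection `u₁ = −y₂`,
`u₂ = y₁` of `ẋ₁ = f₁(x₁) + B₁u₁, y₁ = C₁x₁` and `ẋ₂ = f₂(x₂) + B₂u₂, y₂ = C₂x₂`. -/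
noncomputable def closedLoopField {n₁ n₂ m₁ m₂ : ℕ}
    (f₁ : (Fin n₁ → ℝ) → (Fin n₁ → ℝ)) (f₂ : (Fin n₂ → ℝ) → (Fin n₂ → ℝ))
    (B₁ : Matrix (Fin n₁) (Fin m₁) ℝ) (C₁ : Matrix (Fin m₂) (Fin n₁) ℝ)
    (B₂ : Matrix (Fin n₂) (Fin m₂) ℝ) (C₂ : Matrix (Fin m₁) (Fin n₂) ℝ)
    (x : Fin n₁ ⊕ Fin n₂ → ℝ) : Fin n₁ ⊕ Fin n₂ → ℝ :=
  Sum.elim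
    (f₁ (x ∘ Sum.inl) - (B₁ * C₂).mulVec (x ∘ Sum.inr))
    (f₂ (x ∘ Sum.inr) + (B₂ * C₁).mulVec (x ∘ Sum.inl))


/-! ### Auxiliary lemmas -/

section Aux
open Matrix Polynomial

lemma evalCharpoly {n : Type*} [Fintype n] [DecidableEq n] {R : Type*} [CommRing R]
    (M : Matrix n n R) (z : R) : M.charpoly.eval z = (z • (1 : Matrix n n R) - M).det := by
  rw [Matrix.charpoly, ← Polynomial.coe_evalRingHom, RingHom.map_det]
  congr 1
  ext i j
  simp only [RingHom.mapMatrix_apply, Matrix.map_apply, Polynomial.coe_evalRingHom]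
  by_cases h : i = j <;>
    simp [h, charmatrix_apply, Matrix.one_apply, Matrix.sub_apply, Matrix.smul_apply,
      Matrix.diagonal_apply]

lemma rootsCharpolySmul {n : Type*} [Fintype n] [DecidableEq n]
    (M : Matrix n n ℂ) (c : ℂ) (hc : c ≠ 0) :
    ((c • M).charpoly).roots = M.charpoly.roots.map (fun a => c * a) := by
  have hM : M.charpoly.Monic := M.charpoly_monic
  have hsp : M.charpoly.Splits := IsAlgClosed.splits _
  have hcard : M.charpoly.roots.card = Fintype.card n := by
    rw [Polynomial.splits_iff_card_roots.mp hsp, Matrix.charpoly_natDegree_eq_dim]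
  have hfac : M.charpoly = (M.charpoly.roots.map fun a => X - C a).prod :=
    hsp.eq_prod_roots_of_monic hM
  have key : (c • M).charpoly = (M.charpoly.roots.map (fun a => X - C (c * a))).prod := by
    apply Polynomial.funext
    intro z
    have h1 : z • (1 : Matrix n n ℂ) - c • M = c • ((c⁻¹ * z) • (1 : Matrix n n ℂ) - M) := by
      rw [smul_sub, smul_smul, mul_comm c, mul_assoc]
      field_simp
    rw [evalCharpoly, h1, Matrix.det_smul, ← evalCharpoly]
    conv_lhs => rw [hfac]
    rw [Polynomial.eval_multiset_prod, Polynomial.eval_multiset_prod,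
      Multiset.map_map, Multiset.map_map]
    have h2 : ∀ a : ℂ, (Polynomial.eval z ∘ fun a => X - C (c * a)) a
        = c * ((Polynomial.eval (c⁻¹ * z) ∘ fun a => X - C a) a) := by
      intro a
      simp only [Function.comp_apply, Polynomial.eval_sub, Polynomial.eval_X, Polynomial.eval_C]
      field_simp
    rw [Multiset.map_congr rfl (fun a _ => h2 a), Multiset.prod_map_mul]
    simp [hcard]
  rw [key, show (M.charpoly.roots.map (fun a => X - C (c * a)))
      = ((M.charpoly.roots.map (fun a => c * a)).map fun a => X - C a) by
        rw [Multiset.map_map]; rfl,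
    Polynomial.roots_multiset_prod_X_sub_C]

open scoped Classical in
lemma eigCount_fromBlocks {n₁ n₂ : Type*} [Fintype n₁] [DecidableEq n₁]
    [Fintype n₂] [DecidableEq n₂]
    (A : Matrix n₁ n₁ ℝ) (D : Matrix n₂ n₂ ℝ) (p : ℂ → Prop) :
    eigCount (Matrix.fromBlocks A 0 0 D) p = eigCount A p + eigCount D p := by
  unfold eigCount
  have hmap : (Matrix.fromBlocks A 0 0 D).map (Complex.ofReal)
      = Matrix.fromBlocks (A.map Complex.ofReal) 0 0 (D.map Complex.ofReal) := by
    rw [Matrix.fromBlocks_map, Matrix.map_zero _ Complex.ofReal_zero,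
      Matrix.map_zero _ Complex.ofReal_zero]
  rw [hmap, Matrix.charpoly_fromBlocks_zero₂₁,
    Polynomial.roots_mul (mul_ne_zero (Matrix.charpoly_monic _).ne_zero
      (Matrix.charpoly_monic _).ne_zero),
    Multiset.filter_add, Multiset.card_add]

open scoped Classical in
lemma eigCount_smul {n : Type*} [Fintype n] [DecidableEq n]
    (M : Matrix n n ℝ) (c : ℝ) (hc : 0 < c) (p : ℂ → Prop)
    (hp : ∀ z : ℂ, p ((c : ℂ) * z) ↔ p z) :
    eigCount (c • M) p = eigCount M p := by
  unfold eigCount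
  have hmap : (c • M).map (Complex.ofReal) = (c : ℂ) • (M.map Complex.ofReal) := by
    ext i j; simp [Complex.ofReal_mul]
  rw [hmap, rootsCharpolySmul _ _ (by exact_mod_cast hc.ne'), Multiset.filter_map,
    Multiset.card_map]
  congr 1
  apply Multiset.filter_congr
  intro z _
  simpa using hp z

lemma dot_symm_mulVec {n : Type*} [Fintype n] (P : Matrix n n ℝ) (hP : Pᵀ = P)
    (v w : n → ℝ) : v ⬝ᵥ (P *ᵥ w) = (P *ᵥ v) ⬝ᵥ w := by
  rw [dotProduct_mulVec]
  conv_lhs => rw [← hP]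
  rw [vecMul_transpose]

lemma dot_transpose_mulVec {n m : Type*} [Fintype n] [Fintype m] (A : Matrix n m ℝ)
    (v : m → ℝ) (w : n → ℝ) : v ⬝ᵥ (Aᵀ *ᵥ w) = (A *ᵥ v) ⬝ᵥ w := by
  rw [dotProduct_mulVec, vecMul_transpose]

lemma lmi_quad {n m l : Type*} [Fintype n] [DecidableEq n] [Fintype m] [DecidableEq m]
    [Fintype l]
    (J P : Matrix n n ℝ) (hP : Pᵀ = P) (B : Matrix n m ℝ)
    (C : Matrix l n ℝ) (lam ε γ : ℝ)
    (h : (-(Matrix.fromBlocks (Jᵀ * P + P * J + (2 * lam) • P + ε • 1 + Cᵀ * C)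
        (P * B) (Bᵀ * P) (-(γ ^ 2) • (1 : Matrix m m ℝ)))).PosSemidef)
    (v : n → ℝ) (u : m → ℝ) :
    2 * ((J *ᵥ v) ⬝ᵥ (P *ᵥ v)) + 2 * lam * (v ⬝ᵥ (P *ᵥ v)) + ε * (v ⬝ᵥ v)
      + (C *ᵥ v) ⬝ᵥ (C *ᵥ v) + 2 * ((B *ᵥ u) ⬝ᵥ (P *ᵥ v)) - γ ^ 2 * (u ⬝ᵥ u) ≤ 0 := by
  have h0 := h.dotProduct_mulVec_nonneg (Sum.elim v u)
  rw [star_trivial, neg_mulVec, dotProduct_neg] at h0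
  rw [Matrix.fromBlocks_mulVec, sumElim_dotProduct_sumElim] at h0
  simp only [Sum.elim_comp_inl, Sum.elim_comp_inr] at h0
  have e1 : v ⬝ᵥ ((Jᵀ * P + P * J + (2 * lam) • P + ε • 1 + Cᵀ * C) *ᵥ v + (P * B) *ᵥ u)
      = 2 * ((J *ᵥ v) ⬝ᵥ (P *ᵥ v)) + 2 * lam * (v ⬝ᵥ (P *ᵥ v)) + ε * (v ⬝ᵥ v)
        + (C *ᵥ v) ⬝ᵥ (C *ᵥ v) + ((B *ᵥ u) ⬝ᵥ (P *ᵥ v)) := by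
    simp only [add_mulVec, dotProduct_add, ← mulVec_mulVec, smul_mulVec, one_mulVec,
      dotProduct_smul, smul_eq_mul, dot_transpose_mulVec]
    rw [dot_symm_mulVec P hP v (J *ᵥ v), dot_symm_mulVec P hP v (B *ᵥ u),
      dotProduct_comm (P *ᵥ v) (J *ᵥ v), dotProduct_comm (P *ᵥ v) (B *ᵥ u)]
    ring
  have e2 : u ⬝ᵥ ((Bᵀ * P) *ᵥ v + (-(γ ^ 2) • 1) *ᵥ u)
      = ((B *ᵥ u) ⬝ᵥ (P *ᵥ v)) - γ ^ 2 * (u ⬝ᵥ u) := by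
    simp only [add_mulVec, dotProduct_add, ← mulVec_mulVec, smul_mulVec, one_mulVec,
      dotProduct_smul, smul_eq_mul, dot_transpose_mulVec]
    ring
  rw [e1, e2] at h0
  linarith

lemma isHermitian_of_transpose {n : Type*} [Fintype n] (M : Matrix n n ℝ) (h : Mᵀ = M) :
    M.IsHermitian := by
  unfold Matrix.IsHermitian
  ext i j
  rw [Matrix.conjTranspose_apply, star_trivial]
  exact congrFun (congrFun h i) j

lemma dotProduct_self_nonneg' {n : Type*} [Fintype n] (v : n → ℝ) : 0 ≤ v ⬝ᵥ v :=
  Finset.sum_nonneg fun i _ => mul_self_nonneg (v i)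

noncomputable def pi1 {n₁ n₂ : ℕ} : ((Fin n₁ ⊕ Fin n₂) → ℝ) →L[ℝ] (Fin n₁ → ℝ) :=
  ContinuousLinearMap.pi (fun i => ContinuousLinearMap.proj (Sum.inl i))

noncomputable def pi2 {n₁ n₂ : ℕ} : ((Fin n₁ ⊕ Fin n₂) → ℝ) →L[ℝ] (Fin n₂ → ℝ) :=
  ContinuousLinearMap.pi (fun i => ContinuousLinearMap.proj (Sum.inr i))

lemma jacobian_closedLoopField {n₁ n₂ m₁ m₂ : ℕ}
    (f₁ : (Fin n₁ → ℝ) → (Fin n₁ → ℝ)) (f₂ : (Fin n₂ → ℝ) → (Fin n₂ → ℝ))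
    (B₁ : Matrix (Fin n₁) (Fin m₁) ℝ) (C₁ : Matrix (Fin m₂) (Fin n₁) ℝ)
    (B₂ : Matrix (Fin n₂) (Fin m₂) ℝ) (C₂ : Matrix (Fin m₁) (Fin n₂) ℝ)
    (hf₁ : ContDiff ℝ 1 f₁) (hf₂ : ContDiff ℝ 1 f₂)
    (x : Fin n₁ ⊕ Fin n₂ → ℝ) :
    jacobian (closedLoopField f₁ f₂ B₁ C₁ B₂ C₂) x =
      Matrix.fromBlocks (jacobian f₁ (x ∘ Sum.inl)) (-(B₁ * C₂))
        (B₂ * C₁) (jacobian f₂ (x ∘ Sum.inr)) := by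
  set Jx := Matrix.fromBlocks (jacobian f₁ (x ∘ Sum.inl)) (-(B₁ * C₂))
        (B₂ * C₁) (jacobian f₂ (x ∘ Sum.inr)) with hJx
  set L : ((Fin n₁ ⊕ Fin n₂) → ℝ) →L[ℝ] ((Fin n₁ ⊕ Fin n₂) → ℝ) :=
    LinearMap.toContinuousLinearMap (Matrix.toLin' Jx) with hL
  have hD₁ : HasFDerivAt f₁ (fderiv ℝ f₁ (x ∘ Sum.inl)) (x ∘ Sum.inl) :=
    (hf₁.differentiable one_ne_zero _).hasFDerivAt
  have hD₂ : HasFDerivAt f₂ (fderiv ℝ f₂ (x ∘ Sum.inr)) (x ∘ Sum.inr) :=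
    (hf₂.differentiable one_ne_zero _).hasFDerivAt
  have hπ₁ : ∀ y : (Fin n₁ ⊕ Fin n₂) → ℝ, (pi1 (n₁ := n₁) (n₂ := n₂)) y = y ∘ Sum.inl := by
    intro y; rfl
  have hπ₂ : ∀ y : (Fin n₁ ⊕ Fin n₂) → ℝ, (pi2 (n₁ := n₁) (n₂ := n₂)) y = y ∘ Sum.inr := by
    intro y; rfl
  have h1 : HasFDerivAt (fun y : (Fin n₁ ⊕ Fin n₂) → ℝ =>
      f₁ (y ∘ Sum.inl) - (B₁ * C₂).mulVec (y ∘ Sum.inr))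
      ((fderiv ℝ f₁ (x ∘ Sum.inl)).comp pi1 -
        (LinearMap.toContinuousLinearMap (Matrix.toLin' (B₁ * C₂))).comp pi2) x := by
    apply HasFDerivAt.sub
    · exact hD₁.comp x (pi1.hasFDerivAt)
    · have := ((LinearMap.toContinuousLinearMap (Matrix.toLin' (B₁ * C₂))).comp
        (pi2 (n₁ := n₁) (n₂ := n₂))).hasFDerivAt (x := x)
      exact this
  have h2 : HasFDerivAt (fun y : (Fin n₁ ⊕ Fin n₂) → ℝ =>
      f₂ (y ∘ Sum.inr) + (B₂ * C₁).mulVec (y ∘ Sum.inl))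
      ((fderiv ℝ f₂ (x ∘ Sum.inr)).comp pi2 +
        (LinearMap.toContinuousLinearMap (Matrix.toLin' (B₂ * C₁))).comp pi1) x := by
    apply HasFDerivAt.add
    · exact hD₂.comp x (pi2.hasFDerivAt)
    · have := ((LinearMap.toContinuousLinearMap (Matrix.toLin' (B₂ * C₁))).comp
        (pi1 (n₁ := n₁) (n₂ := n₂))).hasFDerivAt (x := x)
      exact this
  have hg : HasFDerivAt (closedLoopField f₁ f₂ B₁ C₁ B₂ C₂) L x := by
    apply hasFDerivAt_pi''
    intro k
    cases k with
    | inl i =>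
        have := hasFDerivAt_pi'.1 h1 i
        convert this using 1
        · rfl
        ext v
        simp only [ContinuousLinearMap.comp_apply, ContinuousLinearMap.proj_apply, hL,
          LinearMap.coe_toContinuousLinearMap', Matrix.toLin'_apply,
          ContinuousLinearMap.coe_sub', Pi.sub_apply]
        rw [show v = Sum.elim (v ∘ Sum.inl) (v ∘ Sum.inr) from (Sum.elim_comp_inl_inr v).symm,
          hJx, Matrix.fromBlocks_mulVec]
        simp only [Sum.elim_inl, Pi.add_apply, Matrix.neg_mulVec, Pi.neg_apply]
        have e1 : (Sum.elim (v ∘ Sum.inl) (v ∘ Sum.inr)) ∘ Sum.inl = v ∘ Sum.inl := rfl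
        have e2 : (Sum.elim (v ∘ Sum.inl) (v ∘ Sum.inr)) ∘ Sum.inr = v ∘ Sum.inr := rfl
        have key : ∀ w, (LinearMap.toMatrix'
            ((fderiv ℝ f₁ (x ∘ Sum.inl)).toLinearMap)) *ᵥ w
            = fderiv ℝ f₁ (x ∘ Sum.inl) w := fun w => by
          rw [← Matrix.toLin'_apply, Matrix.toLin'_toMatrix']; rfl
        rw [e1, e2, hπ₁, hπ₂, e1, e2, jacobian, key]
        ring
    | inr j =>
        have := hasFDerivAt_pi'.1 h2 j
        convert this using 1
        · rfl
        ext v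
        simp only [ContinuousLinearMap.comp_apply, ContinuousLinearMap.proj_apply, hL,
          LinearMap.coe_toContinuousLinearMap', Matrix.toLin'_apply,
          ContinuousLinearMap.coe_add', Pi.add_apply]
        rw [show v = Sum.elim (v ∘ Sum.inl) (v ∘ Sum.inr) from (Sum.elim_comp_inl_inr v).symm,
          hJx, Matrix.fromBlocks_mulVec]
        simp only [Sum.elim_inr, Pi.add_apply]
        have e1 : (Sum.elim (v ∘ Sum.inl) (v ∘ Sum.inr)) ∘ Sum.inl = v ∘ Sum.inl := rfl
        have e2 : (Sum.elim (v ∘ Sum.inl) (v ∘ Sum.inr)) ∘ Sum.inr = v ∘ Sum.inr := rfl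
        have key : ∀ w, (LinearMap.toMatrix'
            ((fderiv ℝ f₂ (x ∘ Sum.inr)).toLinearMap)) *ᵥ w
            = fderiv ℝ f₂ (x ∘ Sum.inr) w := fun w => by
          rw [← Matrix.toLin'_apply, Matrix.toLin'_toMatrix']; rfl
        rw [e1, e2, hπ₁, hπ₂, e1, e2, jacobian, key]
        ring
  have hfd : fderiv ℝ (closedLoopField f₁ f₂ B₁ C₁ B₂ C₂) x = L := hg.fderiv
  rw [jacobian, hfd]
  exact LinearMap.toMatrix'_toLin' Jx

end Aux

/-- (Small-gain theorem for `p`-dominance.) If `Σᵢ` (for `i = 1, 2`)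
has strict differential `L_{2,pᵢ}` gain less than `γᵢ` with rate `λ`, certified by a
symmetric `Pᵢ` with inertia `(pᵢ, 0, nᵢ − pᵢ)`, and `γ₁γ₂ < 1`, then the closed-loop
system obtained from the feedback interconnection `u₁ = −y₂`, `u₂ = y₁` is strictly
`(p₁ + p₂)`-dominant with rate `λ`. -/
theorem statement5 {n₁ n₂ m₁ m₂ p₁ p₂ : ℕ} (hp₁ : p₁ ≤ n₁) (hp₂ : p₂ ≤ n₂)
    (f₁ : (Fin n₁ → ℝ) → (Fin n₁ → ℝ)) (hf₁ : ContDiff ℝ 1 f₁)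
    (f₂ : (Fin n₂ → ℝ) → (Fin n₂ → ℝ)) (hf₂ : ContDiff ℝ 1 f₂)
    (B₁ : Matrix (Fin n₁) (Fin m₁) ℝ) (C₁ : Matrix (Fin m₂) (Fin n₁) ℝ)
    (B₂ : Matrix (Fin n₂) (Fin m₂) ℝ) (C₂ : Matrix (Fin m₁) (Fin n₂) ℝ)
    (lam γ₁ γ₂ ε₁ ε₂ : ℝ) (hlam : 0 ≤ lam)
    (hγ₁ : 0 < γ₁) (hγ₂ : 0 < γ₂) (hε₁ : 0 < ε₁) (hε₂ : 0 < ε₂)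
    (P₁ : Matrix (Fin n₁) (Fin n₁) ℝ) (hP₁symm : P₁ᵀ = P₁)
    (hP₁inertia : hasInertia P₁ p₁ (n₁ - p₁))
    (P₂ : Matrix (Fin n₂) (Fin n₂) ℝ) (hP₂symm : P₂ᵀ = P₂)
    (hP₂inertia : hasInertia P₂ p₂ (n₂ - p₂))
    (hLMI₁ : ∀ x : Fin n₁ → ℝ,
      (-(Matrix.fromBlocks
        ((jacobian f₁ x)ᵀ * P₁ + P₁ * jacobian f₁ x + (2 * lam) • P₁ + ε₁ • 1 + C₁ᵀ * C₁)
        (P₁ * B₁) (B₁ᵀ * P₁)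
        (-(γ₁ ^ 2) • (1 : Matrix (Fin m₁) (Fin m₁) ℝ)))).PosSemidef)
    (hLMI₂ : ∀ x : Fin n₂ → ℝ,
      (-(Matrix.fromBlocks
        ((jacobian f₂ x)ᵀ * P₂ + P₂ * jacobian f₂ x + (2 * lam) • P₂ + ε₂ • 1 + C₂ᵀ * C₂)
        (P₂ * B₂) (B₂ᵀ * P₂)
        (-(γ₂ ^ 2) • (1 : Matrix (Fin m₂) (Fin m₂) ℝ)))).PosSemidef)
    (hsg : γ₁ * γ₂ < 1) :
    ∃ (ε : ℝ) (P : Matrix (Fin n₁ ⊕ Fin n₂) (Fin n₁ ⊕ Fin n₂) ℝ), 0 < ε ∧ Pᵀ = P ∧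
      hasInertia P (p₁ + p₂) (n₁ + n₂ - (p₁ + p₂)) ∧
      ∀ x : Fin n₁ ⊕ Fin n₂ → ℝ,
        ((-(ε • (1 : Matrix (Fin n₁ ⊕ Fin n₂) (Fin n₁ ⊕ Fin n₂) ℝ))) -
          ((jacobian (closedLoopField f₁ f₂ B₁ C₁ B₂ C₂) x)ᵀ * P +
            P * jacobian (closedLoopField f₁ f₂ B₁ C₁ B₂ C₂) x +
            (2 * lam) • P)).PosSemidef := by
  set d : ℝ := γ₁ / γ₂ with hd_def
  have hd : 0 < d := div_pos hγ₁ hγ₂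
  set Pb : Matrix (Fin n₁ ⊕ Fin n₂) (Fin n₁ ⊕ Fin n₂) ℝ :=
    Matrix.fromBlocks P₁ 0 0 (d • P₂) with hPb
  have hPbsymm : Pbᵀ = Pb := by
    rw [hPb, Matrix.fromBlocks_transpose, Matrix.transpose_zero, Matrix.transpose_zero,
      Matrix.transpose_smul, hP₁symm, hP₂symm]
  refine ⟨min ε₁ (d * ε₂), Pb, lt_min hε₁ (mul_pos hd hε₂), hPbsymm, ?_, ?_⟩
  · -- inertia
    obtain ⟨hn₁, hz₁, hp₁'⟩ := hP₁inertia
    obtain ⟨hn₂, hz₂, hp₂'⟩ := hP₂inertia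
    have hsm : ∀ p : ℂ → Prop, (∀ z : ℂ, p ((d : ℂ) * z) ↔ p z) →
        eigCount (d • P₂) p = eigCount P₂ p := fun p hp => eigCount_smul P₂ d hd p hp
    have e1 : eigCount (d • P₂) (fun z => z.re < 0) = p₂ := by
      rw [hsm _ fun z => by
        rw [Complex.re_ofReal_mul]
        constructor <;> intro h <;> nlinarith]
      exact hn₂
    have e2 : eigCount (d • P₂) (fun z => z.re = 0) = 0 := by
      rw [hsm _ fun z => by
        rw [Complex.re_ofReal_mul]
        constructor <;> intro h
        · rcases mul_eq_zero.mp h with h' | h' 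
          · exact absurd h' hd.ne'
          · exact h'
        · rw [h, mul_zero]]
      exact hz₂
    have e3 : eigCount (d • P₂) (fun z => 0 < z.re) = n₂ - p₂ := by
      rw [hsm _ fun z => by
        rw [Complex.re_ofReal_mul]
        constructor <;> intro h <;> nlinarith]
      exact hp₂'
    refine ⟨?_, ?_, ?_⟩
    · rw [hPb, eigCount_fromBlocks, hn₁, e1]
    · rw [hPb, eigCount_fromBlocks, hz₁, e2]
    · rw [hPb, eigCount_fromBlocks, hp₁', e3]
      omega
  · -- the LMI
    intro x
    rw [jacobian_closedLoopField f₁ f₂ B₁ C₁ B₂ C₂ hf₁ hf₂ x]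
    set J₁ := jacobian f₁ (x ∘ Sum.inl) with hJ₁
    set J₂ := jacobian f₂ (x ∘ Sum.inr) with hJ₂
    set Jb : Matrix (Fin n₁ ⊕ Fin n₂) (Fin n₁ ⊕ Fin n₂) ℝ :=
      Matrix.fromBlocks J₁ (-(B₁ * C₂)) (B₂ * C₁) J₂ with hJb
    refine Matrix.PosSemidef.of_dotProduct_mulVec_nonneg ?_ ?_
    · -- Hermitian
      apply isHermitian_of_transpose
      rw [Matrix.transpose_sub, Matrix.transpose_neg, Matrix.transpose_smul,
        Matrix.transpose_one, Matrix.transpose_add, Matrix.transpose_add,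
        Matrix.transpose_smul, Matrix.transpose_mul, Matrix.transpose_mul,
        Matrix.transpose_transpose, hPbsymm]
      congr 1
      abel
    · intro v
      rw [star_trivial]
      set v₁ : Fin n₁ → ℝ := v ∘ Sum.inl with hv₁
      set v₂ : Fin n₂ → ℝ := v ∘ Sum.inr with hv₂
      have ineq1 := lmi_quad J₁ P₁ hP₁symm B₁ C₁ lam ε₁ γ₁ (hLMI₁ (x ∘ Sum.inl))
        v₁ (-(C₂ *ᵥ v₂))
      have ineq2 := lmi_quad J₂ P₂ hP₂symm B₂ C₂ lam ε₂ γ₂ (hLMI₂ (x ∘ Sum.inr))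
        v₂ (C₁ *ᵥ v₁)
      simp only [Matrix.mulVec_neg, ← mulVec_mulVec, neg_dotProduct, dotProduct_neg,
        neg_neg] at ineq1
      have hv : v = Sum.elim v₁ v₂ := (Sum.elim_comp_inl_inr v).symm
      rw [hv]
      simp only [hJb, hPb, Matrix.sub_mulVec, Matrix.add_mulVec, Matrix.neg_mulVec, smul_mulVec,
        one_mulVec, Matrix.mulVec_add, Matrix.mulVec_neg,
        dotProduct_sub, dotProduct_add, dotProduct_neg, neg_dotProduct, add_dotProduct,
        sub_dotProduct, dotProduct_smul, smul_dotProduct, smul_eq_mul, ← mulVec_mulVec,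
        dot_transpose_mulVec, Matrix.fromBlocks_mulVec, sumElim_dotProduct_sumElim,
        Sum.elim_comp_inl, Sum.elim_comp_inr, Matrix.zero_mulVec, add_zero, zero_add,
        dotProduct_zero, zero_dotProduct, neg_zero]
      rw [dot_symm_mulVec P₁ hP₁symm v₁ (J₁ *ᵥ v₁), dotProduct_comm (P₁ *ᵥ v₁) (J₁ *ᵥ v₁),
        dot_symm_mulVec P₁ hP₁symm v₁ (B₁ *ᵥ C₂ *ᵥ v₂),
        dotProduct_comm (P₁ *ᵥ v₁) (B₁ *ᵥ C₂ *ᵥ v₂),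
        dot_symm_mulVec P₂ hP₂symm v₂ (B₂ *ᵥ C₁ *ᵥ v₁),
        dotProduct_comm (P₂ *ᵥ v₂) (B₂ *ᵥ C₁ *ᵥ v₁),
        dot_symm_mulVec P₂ hP₂symm v₂ (J₂ *ᵥ v₂), dotProduct_comm (P₂ *ᵥ v₂) (J₂ *ᵥ v₂)]
      have hK1 : (0:ℝ) ≤ C₁ *ᵥ v₁ ⬝ᵥ C₁ *ᵥ v₁ := dotProduct_self_nonneg' _
      have hK2 : (0:ℝ) ≤ C₂ *ᵥ v₂ ⬝ᵥ C₂ *ᵥ v₂ := dotProduct_self_nonneg' _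
      have hN1 : (0:ℝ) ≤ v₁ ⬝ᵥ v₁ := dotProduct_self_nonneg' _
      have hN2 : (0:ℝ) ≤ v₂ ⬝ᵥ v₂ := dotProduct_self_nonneg' _
      have hsg2 : d * γ₂ ^ 2 ≤ 1 := by
        have : d * γ₂ ^ 2 = γ₁ * γ₂ := by
          rw [hd_def]; field_simp
        rw [this]; exact hsg.le
      have hsg1 : γ₁ ^ 2 ≤ d := by
        rw [hd_def, le_div_iff₀ hγ₂]
        nlinarith [mul_lt_mul_of_pos_left hsg hγ₁]
      have hmin1 : ε₁ ⊓ (d * ε₂) ≤ ε₁ := min_le_left _ _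
      have hmin2 : ε₁ ⊓ (d * ε₂) ≤ d * ε₂ := min_le_right _ _
      have ineq2' := mul_le_mul_of_nonneg_left ineq2 hd.le
      rw [mul_zero] at ineq2'
      have hA : (0:ℝ) ≤ (1 - d * γ₂ ^ 2) * (C₁ *ᵥ v₁ ⬝ᵥ C₁ *ᵥ v₁) :=
        mul_nonneg (by linarith) hK1
      have hB : (0:ℝ) ≤ (d - γ₁ ^ 2) * (C₂ *ᵥ v₂ ⬝ᵥ C₂ *ᵥ v₂) :=
        mul_nonneg (by linarith) hK2
      have hE : (0:ℝ) ≤ (ε₁ - ε₁ ⊓ (d * ε₂)) * (v₁ ⬝ᵥ v₁) :=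
        mul_nonneg (by linarith) hN1
      have hF : (0:ℝ) ≤ (d * ε₂ - ε₁ ⊓ (d * ε₂)) * (v₂ ⬝ᵥ v₂) :=
        mul_nonneg (by linarith) hN2
      linarith [ineq1, ineq2', hA, hB, hE, hF]
end

section
/- Let λ ∈ ℝ, A ∈ ℝ^{n×n} with all eigenvalues of A + λI having negative real part, B ∈ ℝ^{n×m}, C ∈ ℝ^{l×n}. Suppose Σ = diag(σ₁, …, σₙ) with σ₁ ≥ σ₂ ≥ … ≥ σₙ > 0 satisfies the shifted Lyapunov equations (A + λI)Σ + Σ(A + λI)ᵀ + BBᵀ = 0 and (A + λI)ᵀΣ + Σ(A + λI) + CᵀC = 0. Fix 1 ≤ ν < n with σ_ν > σ_{ν+1}, partition A = [[A₁₁, A₁₂], [A₂₁, A₂₂]] with A₁₁ ∈ ℝ^{ν×ν}. Then every eigenvalue of A₁₁ + λI has negative real part. -/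
open Matrix Polynomial

section Statement11Aux

private lemma stardot_conjT {a b : Type*} [Fintype a] [Fintype b]
    (N : Matrix a b ℂ) (x : b → ℂ) (w : a → ℂ) :
    star x ⬝ᵥ Nᴴ.mulVec w = star (N.mulVec x) ⬝ᵥ w := by
  rw [Matrix.dotProduct_mulVec, Matrix.star_mulVec]

private lemma stardot_mul {a b : Type*} [Fintype a] [Fintype b]
    (N : Matrix a b ℂ) (x : a → ℂ) (w : b → ℂ) :
    star x ⬝ᵥ N.mulVec w = star (Nᴴ.mulVec x) ⬝ᵥ w := by
  conv_lhs => rw [← Matrix.conjTranspose_conjTranspose N]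
  rw [stardot_conjT]

private lemma stardot_self {a : Type*} [Fintype a] (y : a → ℂ) :
    star y ⬝ᵥ y = ((∑ i, Complex.normSq (y i) : ℝ) : ℂ) := by
  simp only [dotProduct, Pi.star_apply, RCLike.star_def]
  push_cast
  congr 1
  funext i
  rw [Complex.normSq_eq_conj_mul_self]

private lemma stardot_self_eq_zero {a : Type*} [Fintype a] {y : a → ℂ}
    (h : star y ⬝ᵥ y = 0) : y = 0 := by
  rw [stardot_self] at h
  have h2 : (∑ i, Complex.normSq (y i) : ℝ) = 0 := by exact_mod_cast h
  funext i
  have h3 := (Finset.sum_eq_zero_iff_of_nonneg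
    (fun i _ => Complex.normSq_nonneg (y i))).mp h2 i (Finset.mem_univ i)
  simpa [Complex.normSq_eq_zero] using h3

private lemma my_charpoly_eval {k : Type*} [Fintype k] [DecidableEq k]
    (M : Matrix k k ℂ) (z : ℂ) :
    M.charpoly.eval z = (z • (1 : Matrix k k ℂ) - M).det := by
  rw [Matrix.charpoly, ← Polynomial.coe_evalRingHom, RingHom.map_det]
  congr 1
  ext i j
  by_cases h : i = j
  · subst h
    simp [Matrix.charmatrix_apply_eq, Matrix.one_apply]
  · simp [Matrix.charmatrix_apply_ne _ _ _ h, Matrix.one_apply, h]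

private def ext0 {νk nk : ℕ} (y : Fin νk → ℂ) : Fin nk → ℂ :=
  fun p => if h : (p : ℕ) < νk then y ⟨p, h⟩ else 0

private lemma ext0_castLE {νk nk : ℕ} (h : νk ≤ nk) (y : Fin νk → ℂ) (i : Fin νk) :
    ext0 y (Fin.castLE h i) = y i := by
  have hlt : ((Fin.castLE h i : Fin nk) : ℕ) < νk := i.2
  rw [ext0, dif_pos hlt]
  congr 1

private lemma ext0_of_not_lt {νk nk : ℕ} (y : Fin νk → ℂ) (p : Fin nk)
    (hp : ¬ ((p : ℕ) < νk)) : ext0 y p = 0 := dif_neg hp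

private lemma ext0_smul {νk nk : ℕ} (c : ℂ) (y : Fin νk → ℂ) :
    (ext0 (c • y) : Fin nk → ℂ) = c • ext0 y := by
  funext p
  by_cases h : (p : ℕ) < νk
  · simp [ext0, dif_pos h]
  · simp [ext0, dif_neg h]

private lemma ext0_keysum {νk nk : ℕ} (h : νk ≤ nk) (g : Fin nk → ℂ) (y : Fin νk → ℂ) :
    ∑ p, g p * ext0 y p = ∑ j, g (Fin.castLE h j) * y j := by
  have hterm : ∀ p : Fin nk, g p * ext0 y p
      = ∑ j : Fin νk, if Fin.castLE h j = p then g (Fin.castLE h j) * y j else 0 := by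
    intro p
    by_cases hp : (p : ℕ) < νk
    · rw [Finset.sum_eq_single ⟨(p : ℕ), hp⟩]
      · have hep : Fin.castLE h ⟨(p : ℕ), hp⟩ = p := by
          apply Fin.ext; simp
        rw [if_pos hep, hep, ext0, dif_pos hp]
      · intro j _ hj
        rw [if_neg]
        intro hc
        apply hj
        apply Fin.castLE_injective h
        rw [hc]
        apply Fin.ext; simp
      · intro hmem; exact absurd (Finset.mem_univ _) hmem
    · rw [Finset.sum_eq_zero, ext0, dif_neg hp, mul_zero]
      intro j _
      rw [if_neg]
      intro hc
      apply hp
      rw [← hc]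
      simpa using j.2
  rw [Finset.sum_congr rfl fun p _ => hterm p, Finset.sum_comm]
  apply Finset.sum_congr rfl
  intro j _
  simp

private lemma ext0_mulVec {νk nk w : ℕ} (h : νk ≤ nk) (N : Matrix (Fin w) (Fin nk) ℂ)
    (y : Fin νk → ℂ) :
    N.mulVec (ext0 y) = (N.submatrix id (Fin.castLE h)).mulVec y := by
  funext r
  simpa [Matrix.mulVec, dotProduct, Matrix.submatrix_apply] using
    ext0_keysum h (fun q => N r q) y

end Statement11Aux

set_option maxHeartbeats 1000000 in
/-- (Balanced truncation preserves stability relative to the shifted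
axis.) If `A + λI` is Hurwitz and the realization is balanced with rate `λ` — the shifted
Lyapunov equations hold with gramian `Σ = diag(σ₁, …, σₙ)`, `σ₁ ≥ … ≥ σₙ > 0` — and
`σ_ν > σ_{ν+1}` for some `1 ≤ ν < n`, then the leading `ν × ν` block `A₁₁` of `A` is such
that every eigenvalue of `A₁₁ + λI` has negative real part. -/
theorem statement11 {n m l ν : ℕ} (hν1 : 1 ≤ ν) (hνn : ν < n) (lam : ℝ)
    (A : Matrix (Fin n) (Fin n) ℝ) (B : Matrix (Fin n) (Fin m) ℝ)
    (C : Matrix (Fin l) (Fin n) ℝ)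
    (hHurwitz : ∀ z ∈ (((A + lam • 1).map Complex.ofReal).charpoly).roots, z.re < 0)
    (σ : Fin n → ℝ)
    (hσdec : ∀ i j : Fin n, i ≤ j → σ j ≤ σ i) (hσpos : ∀ i : Fin n, 0 < σ i)
    (hreach : (A + lam • 1) * Matrix.diagonal σ +
      Matrix.diagonal σ * (A + lam • 1)ᵀ + B * Bᵀ = 0)
    (hobs : (A + lam • 1)ᵀ * Matrix.diagonal σ +
      Matrix.diagonal σ * (A + lam • 1) + Cᵀ * C = 0)
    (hgap : σ ⟨ν, hνn⟩ < σ ⟨ν - 1, by omega⟩) :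
    ∀ z ∈ (((A.submatrix (Fin.castLE hνn.le) (Fin.castLE hνn.le) + lam • 1).map
      Complex.ofReal).charpoly).roots, z.re < 0 := by
  classical
  intro z hzroot
  by_contra hzre
  push_neg at hzre
  set e : Fin ν → Fin n := Fin.castLE hνn.le with he
  have he_inj : Function.Injective e := Fin.castLE_injective hνn.le
  set Ar : Matrix (Fin n) (Fin n) ℝ := A + lam • 1 with hAr
  set Ac : Matrix (Fin n) (Fin n) ℂ := Ar.map Complex.ofReal with hAc
  set Bc : Matrix (Fin n) (Fin m) ℂ := B.map Complex.ofReal with hBc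
  set Cc : Matrix (Fin l) (Fin n) ℂ := C.map Complex.ofReal with hCc
  set M : Matrix (Fin ν) (Fin ν) ℂ := Ac.submatrix e e with hM
  set S1 : Matrix (Fin ν) (Fin ν) ℂ := Matrix.diagonal (fun j => (σ (e j) : ℂ)) with hS1
  set Sc : Matrix (Fin n) (Fin n) ℂ := Matrix.diagonal (fun p => (σ p : ℂ)) with hSc
  set B1 : Matrix (Fin ν) (Fin m) ℂ := Bc.submatrix e id with hB1
  set C1 : Matrix (Fin l) (Fin ν) ℂ := Cc.submatrix id e with hC1
  -- entrywise real Lyapunov equations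
  have hobsE : ∀ p q : Fin n, Ar q p * σ q + σ p * Ar p q + ∑ r, C r p * C r q = 0 := by
    intro p q
    have h := congrFun (congrFun hobs p) q
    simp only [Matrix.add_apply, Matrix.zero_apply, Matrix.mul_diagonal, Matrix.diagonal_mul,
      Matrix.transpose_apply] at h
    simpa only [Matrix.mul_apply, Matrix.transpose_apply] using h
  have hreachE : ∀ p q : Fin n, Ar p q * σ q + σ p * Ar q p + ∑ r, B p r * B q r = 0 := by
    intro p q
    have h := congrFun (congrFun hreach p) q
    simp only [Matrix.add_apply, Matrix.zero_apply, Matrix.mul_diagonal, Matrix.diagonal_mul,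
      Matrix.transpose_apply] at h
    simpa only [Matrix.mul_apply, Matrix.transpose_apply] using h
  -- block Lyapunov equations over ℂ for any index map f
  have lyapObs : ∀ (k : ℕ) (f : Fin k → Fin n),
      (Ac.submatrix f f)ᴴ * Matrix.diagonal (fun j => (σ (f j) : ℂ)) +
      Matrix.diagonal (fun j => (σ (f j) : ℂ)) * (Ac.submatrix f f) +
      (Cc.submatrix id f)ᴴ * (Cc.submatrix id f) = 0 := by
    intro k f
    ext i j
    have h := hobsE (f i) (f j)
    simp only [Matrix.add_apply, Matrix.zero_apply, Matrix.mul_diagonal, Matrix.diagonal_mul,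
      Matrix.conjTranspose_apply, Matrix.submatrix_apply, hAc, hCc, Matrix.map_apply, id_eq]
    simp only [Matrix.mul_apply, Matrix.conjTranspose_apply, Matrix.submatrix_apply,
      Matrix.map_apply, id_eq, Complex.star_def, Complex.conj_ofReal]
    exact_mod_cast h
  have lyapReach : ∀ (k : ℕ) (f : Fin k → Fin n),
      (Ac.submatrix f f) * Matrix.diagonal (fun j => (σ (f j) : ℂ)) +
      Matrix.diagonal (fun j => (σ (f j) : ℂ)) * (Ac.submatrix f f)ᴴ +
      (Bc.submatrix f id) * (Bc.submatrix f id)ᴴ = 0 := by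
    intro k f
    ext i j
    have h := hreachE (f i) (f j)
    simp only [Matrix.add_apply, Matrix.zero_apply, Matrix.mul_diagonal, Matrix.diagonal_mul,
      Matrix.conjTranspose_apply, Matrix.submatrix_apply, hAc, hBc, Matrix.map_apply, id_eq]
    simp only [Matrix.mul_apply, Matrix.conjTranspose_apply, Matrix.submatrix_apply,
      Matrix.map_apply, id_eq, Complex.star_def, Complex.conj_ofReal]
    exact_mod_cast h
  have L1 : Mᴴ * S1 + S1 * M + C1ᴴ * C1 = 0 := lyapObs ν e
  have L2 : M * S1 + S1 * Mᴴ + B1 * B1ᴴ = 0 := lyapReach ν e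
  have LF1 : Acᴴ * Sc + Sc * Ac + Ccᴴ * Cc = 0 := by
    have h := lyapObs n id
    simpa using h
  have LF2 : Ac * Sc + Sc * Acᴴ + Bc * Bcᴴ = 0 := by
    have h := lyapReach n id
    simpa using h
  -- the eigenvector of M for root z
  have hMeq : (A.submatrix e e + lam • 1).map Complex.ofReal = M := by
    ext i j
    simp [hM, hAc, hAr, Matrix.map_apply, Matrix.submatrix_apply, Matrix.add_apply,
      Matrix.smul_apply, Matrix.one_apply, he_inj.eq_iff]
  rw [hMeq] at hzroot
  have hzeval : M.charpoly.eval z = 0 := (Polynomial.mem_roots'.mp hzroot).2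
  have hdetM : (z • (1 : Matrix (Fin ν) (Fin ν) ℂ) - M).det = 0 := by
    rw [← my_charpoly_eval]; exact hzeval
  obtain ⟨v, hv0, hv⟩ := (Matrix.exists_mulVec_eq_zero_iff).mpr hdetM
  have hMv : M.mulVec v = z • v := by
    rw [Matrix.sub_mulVec, Matrix.smul_mulVec, Matrix.one_mulVec, sub_eq_zero] at hv
    exact hv.symm
  -- quadratic forms
  have quadObs : ∀ x : Fin ν → ℂ, M.mulVec x = z • x →
      ((starRingEnd ℂ) z + z) * (star x ⬝ᵥ S1.mulVec x)
        + star (C1.mulVec x) ⬝ᵥ (C1.mulVec x) = 0 := by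
    intro x hx
    have h0 : (Mᴴ * S1).mulVec x + (S1 * M).mulVec x + (C1ᴴ * C1).mulVec x = 0 := by
      rw [← Matrix.add_mulVec, ← Matrix.add_mulVec, L1, Matrix.zero_mulVec]
    have h1 := congrArg (fun w => star x ⬝ᵥ w) h0
    simp only [dotProduct_add, dotProduct_zero, ← Matrix.mulVec_mulVec] at h1
    rw [stardot_conjT M, stardot_conjT C1, hx, Matrix.mulVec_smul, dotProduct_smul,
      star_smul, smul_dotProduct] at h1
    simp only [smul_eq_mul, RCLike.star_def] at h1
    linear_combination h1
  have quadReach : ∀ w : Fin ν → ℂ, Mᴴ.mulVec w = (starRingEnd ℂ) z • w →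
      (z + (starRingEnd ℂ) z) * (star w ⬝ᵥ S1.mulVec w)
        + star (B1ᴴ.mulVec w) ⬝ᵥ (B1ᴴ.mulVec w) = 0 := by
    intro w hw
    have h0 : (M * S1).mulVec w + (S1 * Mᴴ).mulVec w + (B1 * B1ᴴ).mulVec w = 0 := by
      rw [← Matrix.add_mulVec, ← Matrix.add_mulVec, L2, Matrix.zero_mulVec]
    have h1 := congrArg (fun y => star w ⬝ᵥ y) h0
    simp only [dotProduct_add, dotProduct_zero, ← Matrix.mulVec_mulVec] at h1
    rw [stardot_mul M, stardot_mul B1, hw, Matrix.mulVec_smul, dotProduct_smul,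
      star_smul, smul_dotProduct] at h1
    simp only [smul_eq_mul, RCLike.star_def, Complex.conj_conj] at h1
    linear_combination h1
  -- real forms of the quadratic quantities
  have hq : ∀ x : Fin ν → ℂ,
      star x ⬝ᵥ S1.mulVec x = ((∑ j, σ (e j) * Complex.normSq (x j) : ℝ) : ℂ) := by
    intro x
    simp only [hS1, dotProduct, Matrix.mulVec_diagonal, Pi.star_apply, RCLike.star_def]
    push_cast
    congr 1
    funext j
    rw [Complex.normSq_eq_conj_mul_self]
    ring
  -- z is purely imaginary
  have hcc : (starRingEnd ℂ) z + z = ((2 * z.re : ℝ) : ℂ) := by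
    rw [add_comm]; exact Complex.add_conj z
  have hrez : z.re = 0 := by
    have h := quadObs v hMv
    rw [hq, stardot_self (C1.mulVec v), hcc] at h
    have h' : 2 * z.re * (∑ j, σ (e j) * Complex.normSq (v j))
        + (∑ i, Complex.normSq (C1.mulVec v i)) = 0 := by exact_mod_cast h
    obtain ⟨j1, hj1⟩ := Function.ne_iff.mp hv0
    have hrpos : 0 < ∑ j, σ (e j) * Complex.normSq (v j) := by
      apply Finset.sum_pos' (fun j _ => mul_nonneg (hσpos (e j)).le (Complex.normSq_nonneg _))
      exact ⟨j1, Finset.mem_univ _, mul_pos (hσpos (e j1))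
        (by simpa [Complex.normSq_pos] using hj1)⟩
    have hcnn : 0 ≤ ∑ i, Complex.normSq (C1.mulVec v i) :=
      Finset.sum_nonneg fun i _ => Complex.normSq_nonneg _
    nlinarith
  have hconjz : (starRingEnd ℂ) z = -z := by
    have h := Complex.add_conj z
    rw [hrez] at h
    simp only [mul_zero, Complex.ofReal_zero] at h
    linear_combination h
  -- key consequences for any eigenvector of M with eigenvalue z
  have key : ∀ x : Fin ν → ℂ, M.mulVec x = z • x →
      C1.mulVec x = 0 ∧ Mᴴ.mulVec (S1.mulVec x) = (starRingEnd ℂ) z • (S1.mulVec x) ∧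
      B1ᴴ.mulVec (S1.mulVec x) = 0 ∧
      M.mulVec (S1.mulVec (S1.mulVec x)) = z • (S1.mulVec (S1.mulVec x)) := by
    intro x hx
    have hC : C1.mulVec x = 0 := by
      have h := quadObs x hx
      rw [hconjz] at h
      simp only [neg_add_cancel, zero_mul, zero_add] at h
      exact stardot_self_eq_zero h
    have hvecObs : Mᴴ.mulVec (S1.mulVec x) + S1.mulVec (M.mulVec x)
        + C1ᴴ.mulVec (C1.mulVec x) = 0 := by
      have h0 : (Mᴴ * S1).mulVec x + (S1 * M).mulVec x + (C1ᴴ * C1).mulVec x = 0 := by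
        rw [← Matrix.add_mulVec, ← Matrix.add_mulVec, L1, Matrix.zero_mulVec]
      simpa only [← Matrix.mulVec_mulVec] using h0
    have hMH : Mᴴ.mulVec (S1.mulVec x) = (starRingEnd ℂ) z • (S1.mulVec x) := by
      rw [hC, Matrix.mulVec_zero, add_zero, hx, Matrix.mulVec_smul] at hvecObs
      rw [hconjz]
      linear_combination (norm := module) hvecObs
    have hB : B1ᴴ.mulVec (S1.mulVec x) = 0 := by
      have h := quadReach (S1.mulVec x) hMH
      rw [hconjz] at h
      simp only [add_neg_cancel, zero_mul, zero_add] at h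
      exact stardot_self_eq_zero h
    refine ⟨hC, hMH, hB, ?_⟩
    have hvecReach : M.mulVec (S1.mulVec (S1.mulVec x)) + S1.mulVec (Mᴴ.mulVec (S1.mulVec x))
        + B1.mulVec (B1ᴴ.mulVec (S1.mulVec x)) = 0 := by
      have h0 : (M * S1).mulVec (S1.mulVec x) + (S1 * Mᴴ).mulVec (S1.mulVec x)
          + (B1 * B1ᴴ).mulVec (S1.mulVec x) = 0 := by
        rw [← Matrix.add_mulVec, ← Matrix.add_mulVec, L2, Matrix.zero_mulVec]
      simpa only [← Matrix.mulVec_mulVec] using h0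
    rw [hB, Matrix.mulVec_zero, add_zero, hMH, Matrix.mulVec_smul, hconjz] at hvecReach
    linear_combination (norm := module) hvecReach
  -- find a joint eigenvector of M and S1 * S1
  have hvK : v ∈ Module.End.eigenspace (Matrix.mulVecLin M) z := by
    rw [Module.End.mem_eigenspace_iff, Matrix.mulVecLin_apply]
    exact hMv
  have hinv : ∀ x ∈ Module.End.eigenspace (Matrix.mulVecLin M) z,
      (Matrix.mulVecLin (S1 * S1)) x ∈ Module.End.eigenspace (Matrix.mulVecLin M) z := by
    intro x hx
    rw [Module.End.mem_eigenspace_iff, Matrix.mulVecLin_apply] at hx ⊢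
    have h := (key x hx).2.2.2
    rw [Matrix.mulVecLin_apply, ← Matrix.mulVec_mulVec]
    exact h
  haveI : Nontrivial (Module.End.eigenspace (Matrix.mulVecLin M) z) := by
    refine nontrivial_of_ne ⟨v, hvK⟩ 0 ?_
    intro h
    exact hv0 (congrArg Subtype.val h)
  obtain ⟨s, hs⟩ := Module.End.exists_eigenvalue
    ((Matrix.mulVecLin (S1 * S1)).restrict hinv)
  obtain ⟨y, hy⟩ := hs.exists_hasEigenvector
  have hxK : M.mulVec (y : Fin ν → ℂ) = z • (y : Fin ν → ℂ) := by
    have h := y.2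
    rw [Module.End.mem_eigenspace_iff, Matrix.mulVecLin_apply] at h
    exact h
  set x : Fin ν → ℂ := (y : Fin ν → ℂ) with hxdef
  have hxne : x ≠ 0 := by
    intro h
    exact hy.2 (Subtype.ext h)
  have hxS : (S1 * S1).mulVec x = s • x := by
    have h := hy.apply_eq_smul
    have h2 := congrArg Subtype.val h
    rw [LinearMap.restrict_coe_apply] at h2
    exact h2
  obtain ⟨j₀, hj₀⟩ := Function.ne_iff.mp hxne
  have hsval : s = (σ (e j₀) : ℂ) * (σ (e j₀) : ℂ) := by
    have h := congrFun hxS j₀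
    rw [hS1, Matrix.diagonal_mul_diagonal, Matrix.mulVec_diagonal, Pi.smul_apply,
      smul_eq_mul] at h
    exact (mul_right_cancel₀ hj₀ h).symm
  -- the extended eigenvector
  set u : Fin n → ℂ := ext0 x with hu
  have hu_ne : u ≠ 0 := by
    intro h
    apply hj₀
    have h2 := congrFun h (e j₀)
    rw [hu, he, ext0_castLE hνn.le] at h2
    exact h2
  have hSc_ext : ∀ yy : Fin ν → ℂ, Sc.mulVec (ext0 yy) = ext0 (S1.mulVec yy) := by
    intro yy
    funext p
    rw [hSc, Matrix.mulVec_diagonal]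
    by_cases h : (p : ℕ) < ν
    · have hep : e ⟨(p : ℕ), h⟩ = p := by apply Fin.ext; simp [he]
      rw [← hep, he, ext0_castLE hνn.le, ext0_castLE hνn.le, hS1, Matrix.mulVec_diagonal, he]
    · rw [ext0_of_not_lt _ _ h, ext0_of_not_lt _ _ h, mul_zero]
  have hCcu : Cc.mulVec u = 0 := by
    rw [hu, ext0_mulVec hνn.le]
    have hsub : Cc.submatrix id (Fin.castLE hνn.le) = C1 := by rw [hC1, he]
    rw [hsub]
    exact (key x hxK).1
  have hBScu : Bcᴴ.mulVec (Sc.mulVec u) = 0 := by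
    rw [hu, hSc_ext, ext0_mulVec hνn.le]
    have hsub : Bcᴴ.submatrix id (Fin.castLE hνn.le) = B1ᴴ := by
      rw [hB1, he]
      ext r j
      simp [Matrix.conjTranspose_apply, Matrix.submatrix_apply]
    rw [hsub]
    exact (key x hxK).2.2.1
  have hSSu : Sc.mulVec (Sc.mulVec u) = s • u := by
    rw [hu, hSc_ext, hSc_ext, Matrix.mulVec_mulVec, hxS, ext0_smul]
  have hLF1v : Acᴴ.mulVec (Sc.mulVec u) = -(Sc.mulVec (Ac.mulVec u)) := by
    have h0 : (Acᴴ * Sc).mulVec u + (Sc * Ac).mulVec u + (Ccᴴ * Cc).mulVec u = 0 := by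
      rw [← Matrix.add_mulVec, ← Matrix.add_mulVec, LF1, Matrix.zero_mulVec]
    simp only [← Matrix.mulVec_mulVec] at h0
    rw [hCcu, Matrix.mulVec_zero, add_zero] at h0
    exact eq_neg_of_add_eq_zero_left h0
  have hLF2v : Ac.mulVec (Sc.mulVec (Sc.mulVec u)) = Sc.mulVec (Sc.mulVec (Ac.mulVec u)) := by
    have h0 : (Ac * Sc).mulVec (Sc.mulVec u) + (Sc * Acᴴ).mulVec (Sc.mulVec u)
        + (Bc * Bcᴴ).mulVec (Sc.mulVec u) = 0 := by
      rw [← Matrix.add_mulVec, ← Matrix.add_mulVec, LF2, Matrix.zero_mulVec]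
    simp only [← Matrix.mulVec_mulVec] at h0
    rw [hBScu, Matrix.mulVec_zero, add_zero, hLF1v, Matrix.mulVec_neg] at h0
    linear_combination (norm := module) h0
  have hfinal : Ac.mulVec u = z • u := by
    have hEq : s • Ac.mulVec u = Sc.mulVec (Sc.mulVec (Ac.mulVec u)) := by
      calc s • Ac.mulVec u = Ac.mulVec (s • u) := (Matrix.mulVec_smul Ac s u).symm
        _ = Ac.mulVec (Sc.mulVec (Sc.mulVec u)) := by rw [hSSu]
        _ = Sc.mulVec (Sc.mulVec (Ac.mulVec u)) := hLF2v
    funext p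
    by_cases h : (p : ℕ) < ν
    · have hep : e ⟨(p : ℕ), h⟩ = p := by apply Fin.ext; simp [he]
      have hrow : Ac.mulVec u p = M.mulVec x ⟨(p : ℕ), h⟩ := by
        rw [hu, ext0_mulVec hνn.le, hM]
        simp only [Matrix.mulVec, dotProduct, Matrix.submatrix_apply, id_eq]
        refine Finset.sum_congr rfl fun q _ => ?_
        rw [hep, he]
      have hval : u p = x ⟨(p : ℕ), h⟩ := by
        rw [hu]
        exact dif_pos h
      rw [hrow, hxK, Pi.smul_apply, Pi.smul_apply, hval]
    · have hup : u p = 0 := by rw [hu]; exact ext0_of_not_lt _ _ h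
      have hscalar := congrFun hEq p
      simp only [Pi.smul_apply, smul_eq_mul, hSc, Matrix.mulVec_diagonal] at hscalar
      have hσlt : σ p < σ (e j₀) := by
        have h1 : σ p ≤ σ ⟨ν, hνn⟩ := by
          apply hσdec ⟨ν, hνn⟩ p
          rw [Fin.le_def]
          simpa using not_lt.mp h
        have h2 : σ ⟨ν - 1, by omega⟩ ≤ σ (e j₀) := by
          apply hσdec (e j₀) ⟨ν - 1, by omega⟩
          rw [Fin.le_def]
          have := j₀.2
          simp [he]
          omega
        linarith
      have hw : Ac.mulVec u p = 0 := by
        have h3 : (s - (σ p : ℂ) * (σ p : ℂ)) * Ac.mulVec u p = 0 := by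
          linear_combination hscalar
        rcases mul_eq_zero.mp h3 with h4 | h4
        · exfalso
          rw [hsval, sub_eq_zero] at h4
          have h5 : σ (e j₀) * σ (e j₀) = σ p * σ p := by exact_mod_cast h4
          nlinarith [hσpos p]
        · exact h4
      rw [hw, Pi.smul_apply, hup, smul_zero]
  -- contradiction with the Hurwitz property of the full matrix
  have hker : (z • (1 : Matrix (Fin n) (Fin n) ℂ) - Ac).mulVec u = 0 := by
    rw [Matrix.sub_mulVec, Matrix.smul_mulVec, Matrix.one_mulVec, hfinal, sub_self]
  have hdet : (z • (1 : Matrix (Fin n) (Fin n) ℂ) - Ac).det = 0 :=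
    Matrix.exists_mulVec_eq_zero_iff.mp ⟨u, hu_ne, hker⟩
  have hroot : z ∈ Ac.charpoly.roots := by
    rw [Polynomial.mem_roots']
    refine ⟨(Matrix.charpoly_monic Ac).ne_zero, ?_⟩
    rw [Polynomial.IsRoot, my_charpoly_eval, hdet]
  have := hHurwitz z hroot
  linarith
end
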